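/- Let d ≥ 1, let f : [0,1] × ℝᵈ → ℝᵈ be a time-dependent drift vector field, g : [0,1] → ℝ a diffusion coefficient, and p : [0,1] × ℝᵈ → ℝ_{>0} a twice differentiable probability density path satisfying the Fokker–Planck equation ∂_t p_t(y) = −div_y(f_t(y) p_t(y)) + (g_t²/2) Δ p_t(y) for all t and y, where Δ is the Laplacian in y. Then the vector field w_t(y) = f_t(y) − (g_t²/2) ∇_y log p_t(y) satisfies the continuity equation with p_t: ∂_t p_t(y) + div_y(p_t(y) w_t(y)) = 0 for all t ∈ [0,1] and y ∈ ℝᵈ. -/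

import Mathlib

open MeasureTheory Set

noncomputable section

/-- The (spatial) divergence of a vector field on `ℝᵈ`: `div v x = ∑ i ∂vⁱ/∂xⁱ (x)`. -/
def divergence {d : ℕ} (v : EuclideanSpace ℝ (Fin d) → EuclideanSpace ℝ (Fin d))
    (x : EuclideanSpace ℝ (Fin d)) : ℝ :=
  ∑ i, fderiv ℝ v x (EuclideanSpace.single i 1) i

/-- **From Fokker–Planck to the continuity equation:** if `p` satisfies
`∂_t p_t(y) = −div(f_t(y) p_t(y)) + (g_t²/2) Δ p_t(y)` (with `Δ = div ∘ ∇` the Laplacian),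
then the vector field `w_t(y) = f_t(y) − (g_t²/2) ∇ log p_t(y)` satisfies the continuity
equation with `p_t`. -/
theorem fokker_planck_to_continuity_equation
    {d : ℕ} (hd : 1 ≤ d)
    (f : ℝ → EuclideanSpace ℝ (Fin d) → EuclideanSpace ℝ (Fin d))
    (g : ℝ → ℝ)
    (p : ℝ → EuclideanSpace ℝ (Fin d) → ℝ)
    -- `p` is a twice differentiable, everywhere-positive probability density path
    (hp_pos : ∀ t ∈ Icc (0:ℝ) 1, ∀ y, 0 < p t y)
    (hp_int : ∀ t ∈ Icc (0:ℝ) 1, ∫ y, p t y = 1)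
    (hp_smooth : ∀ t ∈ Icc (0:ℝ) 1, ContDiff ℝ 2 (p t))
    -- the drift is differentiable in space
    (hf_diff : ∀ t ∈ Icc (0:ℝ) 1, Differentiable ℝ (f t))
    -- the Fokker–Planck equation
    (hFP : ∀ t ∈ Icc (0:ℝ) 1, ∀ y,
      deriv (fun s => p s y) t
        = -divergence (fun z => p t z • f t z) y
          + (g t ^ 2 / 2) * divergence (fun z => gradient (p t) z) y) :
    ∀ t ∈ Icc (0:ℝ) 1, ∀ y,
      deriv (fun s => p s y) t
        + divergence
            (fun z => p t z •
              (f t z - (g t ^ 2 / 2) • gradient (fun z' => Real.log (p t z')) z)) y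
        = 0 := by
  intro t ht y
  set c : ℝ := g t ^ 2 / 2 with hc
  have hps := hp_smooth t ht
  have hpd : Differentiable ℝ (p t) := hps.differentiable two_ne_zero
  -- ∇ is differentiable since p is C²
  have hgradC : ContDiff ℝ 1 (fun z => gradient (p t) z) := by
    have h1 : ContDiff ℝ 1 (fun z => fderiv ℝ (p t) z) :=
      hps.fderiv_right (le_refl _)
    exact (InnerProductSpace.toDual ℝ (EuclideanSpace ℝ (Fin d))).symm.contDiff.comp h1
  have hgradd : Differentiable ℝ (fun z => gradient (p t) z) :=
    hgradC.differentiable one_ne_zero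
  -- p ∇ log p = ∇ p
  have key : (fun z => p t z •
      (f t z - c • gradient (fun z' => Real.log (p t z')) z))
      = fun z => p t z • f t z - c • gradient (p t) z := by
    funext z
    have hpz := hp_pos t ht z
    have hgl : gradient (fun z' => Real.log (p t z')) z
        = (p t z)⁻¹ • gradient (p t) z := by
      have hlog : HasFDerivAt (fun z' => Real.log (p t z'))
          ((p t z)⁻¹ • fderiv ℝ (p t) z) z :=
        (Real.hasDerivAt_log hpz.ne').comp_hasFDerivAt z (hpd z).hasFDerivAt
      rw [hlog.hasGradientAt.gradient]
      simp [gradient, _root_.map_smul]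
    rw [hgl, smul_sub, smul_smul, smul_smul]
    congr 2
    field_simp
  rw [key]
  -- linearity of divergence
  have hdiv : divergence (fun z => p t z • f t z - c • gradient (p t) z) y
      = divergence (fun z => p t z • f t z) y
        - c * divergence (fun z => gradient (p t) z) y := by
    have hu : Differentiable ℝ (fun z => p t z • f t z) :=
      hpd.smul (hf_diff t ht)
    have hv : Differentiable ℝ (fun z => c • gradient (p t) z) :=
      hgradd.const_smul c
    unfold divergence
    rw [Finset.mul_sum, ← Finset.sum_sub_distrib]
    congr 1
    funext i
    rw [fderiv_fun_sub (hu y) (hv y)]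
    have hcv : fderiv ℝ (fun z => c • gradient (p t) z) y
        = c • fderiv ℝ (fun z => gradient (p t) z) y := by
      exact fderiv_fun_const_smul (hgradd y) c
    simp [hcv, mul_comm]
  rw [hdiv, hFP t ht y]
  ring

end
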